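/- Let n be divisible by 8 and let H ⊆ F_2^n be a doubly even binary linear code containing the all-one vector (1,1,…,1). Then there exists a doubly even self-dual code H' ⊆ F_2^n (i.e. H' = H'^⊥) with H ⊆ H'. -/

import Mathlib

/-- The weight of a binary vector: the number of nonzero coordinates. -/
def wt {n : ℕ} (α : Fin n → ZMod 2) : ℕ :=
  (Finset.univ.filter (fun i => α i ≠ 0)).card

/-- The standard bilinear form `⟨α,β⟩ = ∑ i, α i * β i` on `F_2^n`. -/
def ip {n : ℕ} (α β : Fin n → ZMod 2) : ZMod 2 := ∑ i, α i * β i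

/-- The dual code of a set of vectors. -/
def dualCode {n : ℕ} (S : Set (Fin n → ZMod 2)) : Set (Fin n → ZMod 2) :=
  {δ | ∀ γ ∈ S, ip δ γ = 0}

open Finset

/-- overlap count -/
def ov {n : ℕ} (x y : Fin n → ZMod 2) : ℕ :=
  (univ.filter (fun i => x i ≠ 0 ∧ y i ≠ 0)).card

lemma wt_add_ov {n : ℕ} (x y : Fin n → ZMod 2) :
    wt (x + y) + 2 * ov x y = wt x + wt y := by
  classical
  have key : ∀ a b : ZMod 2, a + b ≠ 0 ↔ ((a ≠ 0 ∨ b ≠ 0) ∧ ¬(a ≠ 0 ∧ b ≠ 0)) := by decide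
  unfold wt ov
  set A := univ.filter (fun i => x i ≠ 0) with hA
  set B := univ.filter (fun i => y i ≠ 0) with hB
  have h1 : univ.filter (fun i => (x + y) i ≠ 0) = (A ∪ B) \ (A ∩ B) := by
    ext i
    simp only [hA, hB, mem_filter, mem_univ, true_and, mem_sdiff, mem_union, mem_inter,
      Pi.add_apply]
    exact (key (x i) (y i)).trans (by tauto)
  have h2 : univ.filter (fun i => x i ≠ 0 ∧ y i ≠ 0) = A ∩ B := by
    ext i; simp [hA, hB]
  have hsub : A ∩ B ⊆ A ∪ B := (inter_subset_left).trans subset_union_left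
  have := Finset.card_union_add_card_inter A B
  have hc : ((A ∪ B) \ (A ∩ B)).card = (A ∪ B).card - (A ∩ B).card :=
    Finset.card_sdiff_of_subset hsub
  have hle : (A ∩ B).card ≤ (A ∪ B).card := Finset.card_le_card hsub
  rw [h1, h2, hc]
  omega

lemma ip_eq_ov {n : ℕ} (x y : Fin n → ZMod 2) : ip x y = (ov x y : ZMod 2) := by
  classical
  have key : ∀ a b : ZMod 2, a * b = if (a ≠ 0 ∧ b ≠ 0) then 1 else 0 := by decide
  unfold ip ov
  rw [Finset.sum_congr rfl (fun i _ => key (x i) (y i)), Finset.sum_ite,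
    Finset.sum_const, Finset.sum_const]
  simp

lemma ip_comm {n : ℕ} (x y : Fin n → ZMod 2) : ip x y = ip y x := by
  unfold ip; exact Finset.sum_congr rfl (fun i _ => mul_comm _ _)

lemma ip_add_left {n : ℕ} (x y z : Fin n → ZMod 2) :
    ip (x + y) z = ip x z + ip y z := by
  unfold ip
  rw [← Finset.sum_add_distrib]
  exact Finset.sum_congr rfl (fun i _ => by simp [add_mul])

lemma ip_one_right {n : ℕ} (x : Fin n → ZMod 2) :
    ip x (fun _ => 1) = (wt x : ZMod 2) := by
  classical
  have key : ∀ a : ZMod 2, a * 1 = if a ≠ 0 then 1 else 0 := by decide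
  unfold ip wt
  rw [Finset.sum_congr rfl (fun i _ => key (x i)), Finset.sum_ite, Finset.sum_const,
    Finset.sum_const]
  simp


def II : GaussianInt := Zsqrtd.sqrtd

def sgn (a : ZMod 2) : GaussianInt := if a = 0 then 1 else -1

lemma sgn_add : ∀ a b : ZMod 2, sgn (a + b) = sgn a * sgn b := by decide

lemma sgn_sum {ι : Type*} (s : Finset ι) (f : ι → ZMod 2) :
    sgn (∑ i ∈ s, f i) = ∏ i ∈ s, sgn (f i) := by
  classical
  induction s using Finset.cons_induction with
  | empty => simp [sgn]
  | cons a s ha ih => rw [Finset.sum_cons, Finset.prod_cons, sgn_add, ih]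

lemma II_pow_four : II ^ 4 = 1 := by decide
lemma neg_II_pow_four : (-II) ^ 4 = 1 := by decide
lemma one_add_II_pow_eight : (1 + II) ^ 8 = 16 := by decide
lemma one_sub_II : 1 - II = (1 + II) * (-II) := by decide

lemma II_pow_of_four_dvd {w : ℕ} (h : 4 ∣ w) : II ^ w = 1 := by
  obtain ⟨k, rfl⟩ := h; rw [pow_mul, II_pow_four, one_pow]

lemma neg_II_pow_of_four_dvd {w : ℕ} (h : 4 ∣ w) : (-II) ^ w = 1 := by
  obtain ⟨k, rfl⟩ := h; rw [pow_mul, neg_II_pow_four, one_pow]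

lemma II_pow_two_mod_four {w : ℕ} (h : w % 4 = 2) : II ^ w = -1 := by
  obtain ⟨k, hk⟩ : ∃ k, w = 4 * k + 2 := ⟨w / 4, by omega⟩
  rw [hk, pow_add, pow_mul, II_pow_four, one_pow, one_mul]
  decide

lemma coord_sum : ∀ c : ZMod 2,
    ∑ a : ZMod 2, (if a = 0 then 1 else II) * sgn (a * c)
      = if c = 0 then 1 + II else 1 - II := by decide

lemma wt_le {n : ℕ} (x : Fin n → ZMod 2) : wt x ≤ n := by
  classical
  unfold wt
  have := Finset.card_filter_le (Finset.univ : Finset (Fin n)) (fun i => x i ≠ 0)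
  simpa using this

lemma II_pow_wt {n : ℕ} (x : Fin n → ZMod 2) :
    II ^ wt x = ∏ j, (if x j = 0 then 1 else II) := by
  classical
  unfold wt
  rw [Finset.prod_ite, Finset.prod_const, Finset.prod_const, one_pow, one_mul]

lemma add_self_V {n : ℕ} (v : Fin n → ZMod 2) : v + v = 0 := by
  funext i
  exact CharTwo.add_self_eq_zero _
lemma ip_add_right {n : ℕ} (x y z : Fin n → ZMod 2) :
    ip x (y + z) = ip x y + ip x z := by
  rw [ip_comm, ip_add_left, ip_comm y x, ip_comm z x]

lemma factor_sum {n : ℕ} (c : Fin n → ZMod 2) :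
    ∑ x : Fin n → ZMod 2, II ^ wt x * sgn (ip x c)
      = (1 + II) ^ (n - wt c) * (1 - II) ^ (wt c) := by
  classical
  have step1 : ∀ x : Fin n → ZMod 2,
      II ^ wt x * sgn (ip x c) = ∏ j, ((if x j = 0 then 1 else II) * sgn (x j * c j)) := by
    intro x
    rw [II_pow_wt, ip, sgn_sum, ← Finset.prod_mul_distrib]
  rw [Finset.sum_congr rfl (fun x _ => step1 x)]
  have step2 : ∑ x : Fin n → ZMod 2, ∏ j, ((if x j = 0 then 1 else II) * sgn (x j * c j))
      = ∏ j, ∑ a : ZMod 2, ((if a = 0 then 1 else II) * sgn (a * c j)) := by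
    rw [Finset.prod_univ_sum (fun _ => (Finset.univ : Finset (ZMod 2)))
      (fun j a => (if a = 0 then 1 else II) * sgn (a * c j)), Fintype.piFinset_univ]
  rw [step2, Finset.prod_congr rfl (fun j _ => coord_sum (c j)), Finset.prod_ite,
    Finset.prod_const, Finset.prod_const]
  congr 2
  · have := Finset.card_filter_add_card_filter_not
      (s := (Finset.univ : Finset (Fin n))) (p := fun j => c j = 0)
    have hwt : (Finset.univ.filter (fun j => ¬ c j = 0)).card = wt c := rfl
    have hn : (Finset.univ : Finset (Fin n)).card = n := by simp
    omega
open scoped Classical in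
lemma orth_sum {n : ℕ} (C : Submodule (ZMod 2) (Fin n → ZMod 2)) [Fintype ↥C]
    (x : Fin n → ZMod 2) :
    ∑ c : ↥C, sgn (ip x ↑c)
      = if (∀ γ ∈ C, ip x γ = 0) then (Fintype.card ↥C : GaussianInt) else 0 := by
  classical
  by_cases h : ∀ γ ∈ C, ip x γ = 0
  · rw [if_pos h]
    have hone : ∀ c : ↥C, sgn (ip x ↑c) = 1 := fun c => by rw [h c c.2]; rfl
    rw [Finset.sum_congr rfl (fun c _ => hone c)]
    simp
  · rw [if_neg h]
    push_neg at h
    obtain ⟨c₀, hc₀, hne⟩ := h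
    have hip : ip x c₀ = 1 := by
      have : ∀ a : ZMod 2, a ≠ 0 → a = 1 := by decide
      exact this _ hne
    set S := ∑ c : ↥C, sgn (ip x ↑c) with hS
    let e : ↥C ≃ ↥C :=
      ⟨fun c => ⟨↑c + c₀, C.add_mem c.2 hc₀⟩, fun c => ⟨↑c + c₀, C.add_mem c.2 hc₀⟩,
        fun c => Subtype.ext (by simp [add_assoc, add_self_V]),
        fun c => Subtype.ext (by simp [add_assoc, add_self_V])⟩
    have key : S = -S := by
      have h1 : ∑ c : ↥C, sgn (ip x (↑c + c₀)) = S :=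
        Fintype.sum_equiv e _ _ (fun c => rfl)
      have h2 : ∀ c : ↥C, sgn (ip x (↑c + c₀)) = - sgn (ip x ↑c) := by
        intro c
        rw [ip_add_right, sgn_add, hip]
        simp [sgn]
      rw [Finset.sum_congr rfl (fun c _ => h2 c), Finset.sum_neg_distrib] at h1
      exact h1.symm
    have h2S : (2 : GaussianInt) * S = 0 := by rw [two_mul]; nth_rewrite 1 [key]; ring
    rcases mul_eq_zero.1 h2S with h | h
    · exact absurd h (by decide)
    · exact h

open scoped Classical in
lemma gauss_identity {n : ℕ} (C : Submodule (ZMod 2) (Fin n → ZMod 2)) [Fintype ↥C]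
    (hC4 : ∀ c ∈ C, 4 ∣ wt c) :
    ∑ x : Fin n → ZMod 2, (if x ∈ dualCode (C : Set (Fin n → ZMod 2)) then II ^ wt x else 0)
      = (1 + II) ^ n := by
  classical
  have hcard : (Fintype.card ↥C : GaussianInt) ≠ 0 :=
    Nat.cast_ne_zero.2 Fintype.card_pos.ne'
  apply mul_left_cancel₀ hcard
  have hmem : ∀ x : Fin n → ZMod 2,
      x ∈ dualCode (C : Set (Fin n → ZMod 2)) ↔ ∀ γ ∈ C, ip x γ = 0 := fun x => Iff.rfl
  calc (Fintype.card ↥C : GaussianInt)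
        * ∑ x : Fin n → ZMod 2, (if x ∈ dualCode (C : Set (Fin n → ZMod 2)) then II ^ wt x else 0)
      = ∑ x : Fin n → ZMod 2, II ^ wt x * (∑ c : ↥C, sgn (ip x ↑c)) := by
        rw [Finset.mul_sum]
        refine Finset.sum_congr rfl (fun x _ => ?_)
        rw [orth_sum C x]
        by_cases hx : ∀ γ ∈ C, ip x γ = 0
        · rw [if_pos hx, if_pos ((hmem x).2 hx), mul_comm]
        · rw [if_neg hx, if_neg (fun hh => hx ((hmem x).1 hh)), mul_zero, mul_zero]
    _ = ∑ c : ↥C, ∑ x : Fin n → ZMod 2, II ^ wt x * sgn (ip x ↑c) := by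
        rw [Finset.sum_congr rfl (fun x _ => Finset.mul_sum _ _ _)]
        exact Finset.sum_comm
    _ = ∑ c : ↥C, (1 + II) ^ n := by
        refine Finset.sum_congr rfl (fun c _ => ?_)
        rw [factor_sum, one_sub_II, mul_pow, ← mul_assoc, ← pow_add,
          Nat.sub_add_cancel (wt_le _), neg_II_pow_of_four_dvd (hC4 _ c.2), mul_one]
    _ = (Fintype.card ↥C : GaussianInt) * (1 + II) ^ n := by
        simp [Finset.sum_const, Finset.card_univ, nsmul_eq_mul]
lemma zmod2_cast_zero_iff (k : ℕ) : (k : ZMod 2) = 0 ↔ 2 ∣ k := by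
  exact ZMod.natCast_eq_zero_iff k 2
lemma ip_eq_zero_of_de {n : ℕ} {x y : Fin n → ZMod 2}
    (hx : 4 ∣ wt x) (hy : 4 ∣ wt y) (hxy : 4 ∣ wt (x + y)) : ip x y = 0 := by
  have h := wt_add_ov x y
  have h2 : 2 ∣ ov x y := by omega
  rw [ip_eq_ov, zmod2_cast_zero_iff]
  exact h2

lemma wt_add_of_dual {n : ℕ} {x c : Fin n → ZMod 2}
    (hx4 : 4 ∣ wt x) (hc4 : 4 ∣ wt c) (hip : ip x c = 0) : 4 ∣ wt (c + x) := by
  have h := wt_add_ov c x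
  have h2 : 2 ∣ ov c x := by
    rw [ip_comm, ip_eq_ov, zmod2_cast_zero_iff] at hip
    exact hip
  omega

lemma extension_de {n : ℕ} (C : Submodule (ZMod 2) (Fin n → ZMod 2))
    (hC4 : ∀ c ∈ C, 4 ∣ wt c) {x : Fin n → ZMod 2}
    (hx : x ∈ dualCode (C : Set (Fin n → ZMod 2))) (hx4 : 4 ∣ wt x) :
    ∀ y ∈ C ⊔ Submodule.span (ZMod 2) {x}, 4 ∣ wt y := by
  intro y hy
  rw [Submodule.mem_sup] at hy
  obtain ⟨c, hc, z, hz, rfl⟩ := hy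
  rw [Submodule.mem_span_singleton] at hz
  obtain ⟨a, rfl⟩ := hz
  rcases (by decide : ∀ a : ZMod 2, a = 0 ∨ a = 1) a with h | h
  · subst h; simpa using hC4 c hc
  · subst h
    rw [one_smul]
    exact wt_add_of_dual hx4 (hC4 c hc) (hx c hc)
lemma dual_add {n : ℕ} (S : Set (Fin n → ZMod 2)) {x y : Fin n → ZMod 2}
    (hx : x ∈ dualCode S) (hy : y ∈ dualCode S) : x + y ∈ dualCode S := by
  intro γ hγ
  rw [ip_add_left, hx γ hγ, hy γ hγ, add_zero]

theorem stmt4 {n : ℕ} (h8 : 8 ∣ n) (H : Submodule (ZMod 2) (Fin n → ZMod 2))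
    (hde : ∀ x ∈ H, 4 ∣ wt x)
    (hone : (fun _ => (1 : ZMod 2) : Fin n → ZMod 2) ∈ H) :
    ∃ H' : Submodule (ZMod 2) (Fin n → ZMod 2),
      H ≤ H' ∧ (∀ x ∈ H', 4 ∣ wt x) ∧
      (H' : Set (Fin n → ZMod 2)) = dualCode (H' : Set (Fin n → ZMod 2)) := by
  classical
  haveI : Finite (Submodule (ZMod 2) (Fin n → ZMod 2)) :=
    Finite.of_injective _ SetLike.coe_injective
  set S : Set (Submodule (ZMod 2) (Fin n → ZMod 2)) :=
    {K | H ≤ K ∧ ∀ x ∈ K, 4 ∣ wt x} with hSdef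
  obtain ⟨C, hCS, hmax⟩ :=
    Set.Finite.exists_maximalFor id S (Set.toFinite S) ⟨H, ⟨le_refl H, hde⟩⟩
  obtain ⟨hHC, hC4⟩ := hCS
  refine ⟨C, hHC, hC4, ?_⟩
  have hCsub : (C : Set (Fin n → ZMod 2)) ⊆ dualCode (C : Set (Fin n → ZMod 2)) := by
    intro x hx γ hγ
    exact ip_eq_zero_of_de (hC4 x hx) (hC4 γ hγ) (hC4 _ (C.add_mem hx hγ))
  by_contra hne
  obtain ⟨v, hvD, hvC⟩ := Set.exists_of_ssubset (ssubset_of_subset_of_ne hCsub hne)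
  have hone' : (fun _ => (1 : ZMod 2) : Fin n → ZMod 2) ∈ C := hHC hone
  have heven : ∀ x ∈ dualCode (C : Set (Fin n → ZMod 2)), 2 ∣ wt x := by
    intro x hx
    have h1 := hx _ hone'
    rw [ip_one_right, zmod2_cast_zero_iff] at h1
    exact h1
  have hno : ∀ x ∈ dualCode (C : Set (Fin n → ZMod 2)), 4 ∣ wt x → x ∈ C := by
    intro x hx h4
    by_contra hxC
    have hC'4 := extension_de C hC4 hx h4
    have hCC' : C ≤ C ⊔ Submodule.span (ZMod 2) {x} := le_sup_left
    have heq : C = C ⊔ Submodule.span (ZMod 2) {x} :=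
      le_antisymm hCC' (hmax ⟨hHC.trans hCC', hC'4⟩ hCC')
    exact hxC (heq ▸ Submodule.mem_sup_right (Submodule.mem_span_singleton_self x))
  haveI : Fintype ↥C := Fintype.ofFinite _
  have hg := gauss_identity C hC4
  obtain ⟨m, rfl⟩ := h8
  rw [show (1 + II) ^ (8 * m) = (16 : GaussianInt) ^ m by
    rw [pow_mul, one_add_II_pow_eight]] at hg
  set A := Finset.univ.filter (fun x : Fin (8*m) → ZMod 2 => x ∈ C) with hAdef
  set B := Finset.univ.filter
    (fun x : Fin (8*m) → ZMod 2 => x ∈ dualCode (C : Set (Fin (8*m) → ZMod 2))) with hBdef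
  have hmemA : ∀ x, x ∈ A ↔ x ∈ C := by
    intro x; rw [hAdef, Finset.mem_filter]; simp
  have hmemB : ∀ x, x ∈ B ↔ x ∈ dualCode (C : Set (Fin (8*m) → ZMod 2)) := by
    intro x; rw [hBdef, Finset.mem_filter]; simp
  have hAB : A ⊆ B := fun x hx => (hmemB x).2 (hCsub ((hmemA x).1 hx))
  have hval : ∀ x ∈ B, II ^ wt x = if x ∈ A then (1 : GaussianInt) else -1 := by
    intro x hx
    by_cases hxC : x ∈ C
    · rw [if_pos ((hmemA x).2 hxC)]
      exact II_pow_of_four_dvd (hC4 x hxC)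
    · rw [if_neg (fun h => hxC ((hmemA x).1 h))]
      have h2 := heven x ((hmemB x).1 hx)
      have h4 : ¬ 4 ∣ wt x := fun h => hxC (hno x ((hmemB x).1 hx) h)
      exact II_pow_two_mod_four (by omega)
  have hsum : ∑ x : Fin (8*m) → ZMod 2,
      (if x ∈ dualCode (C : Set (Fin (8*m) → ZMod 2)) then II ^ wt x else 0)
      = (A.card : GaussianInt) - ((B \ A).card : GaussianInt) := by
    rw [← Finset.sum_filter, ← hBdef, Finset.sum_congr rfl hval, Finset.sum_ite,
      Finset.sum_const, Finset.sum_const]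
    have e1 : B.filter (fun x => x ∈ A) = A :=
      Finset.ext (fun x => by
        rw [Finset.mem_filter]
        exact ⟨fun h => h.2, fun h => ⟨hAB h, h⟩⟩)
    have e2 : B.filter (fun x => ¬ x ∈ A) = B \ A := by
      rw [Finset.filter_not, e1]
    rw [e1, e2]
    simp [nsmul_eq_mul, sub_eq_add_neg, mul_comm]
  rw [hsum] at hg
  have hgZ : (A.card : ℤ) - ((B \ A).card : ℤ) = 16 ^ m := by
    exact_mod_cast hg
  have hinj : A.card ≤ (B \ A).card := by
    apply Finset.card_le_card_of_injOn (fun x => x + v)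
    · intro x hx
      have hxC := (hmemA x).1 hx
      rw [Finset.mem_coe, Finset.mem_sdiff]
      constructor
      · exact (hmemB _).2 (dual_add _ (hCsub hxC) hvD)
      · intro hxv
        have hxvC := (hmemA _).1 hxv
        have : x + (x + v) ∈ C := C.add_mem hxC hxvC
        rw [← add_assoc, add_self_V, zero_add] at this
        exact hvC this
    · intro x _ y _ hxy
      have := congrArg (fun z => z + v) hxy
      simpa [add_assoc, add_self_V] using hxy
  have hpos : (0 : ℤ) < 16 ^ m := by positivity
  omega
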